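/- Let K ⊆ ℝ² be a nonempty compact convex set with 0 ∈ interior K. Then the image of F₀(K) \ {0} under the inversion i equals {w ∈ ℝ² : p₀(K, w) ≥ 1}; consequently the complement ℝ² \ i(F₀(K) \ {0}) equals {w ∈ ℝ² : p₀(K, w) < 1}, which is an open, bounded, convex set containing 0. -/

import Mathlib

open Metric Real Set MeasureTheory
open scoped RealInnerProductSpace

noncomputable section

/-- The Euclidean plane. -/
abbrev E2 := EuclideanSpace ℝ (Fin 2)

/-- The unit vector `u_θ = (cos θ, sin θ)`. -/
def uvec (θ : ℝ) : E2 := (WithLp.equiv 2 (Fin 2 → ℝ)).symm ![Real.cos θ, Real.sin θ]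

/-- The vector `v_θ = (−sin θ, cos θ)`. -/
def vvec (θ : ℝ) : E2 := (WithLp.equiv 2 (Fin 2 → ℝ)).symm ![-Real.sin θ, Real.cos θ]

/-- The Voronoi flower of `L` with respect to `x`: the union over `s ∈ L` of the closed
balls admitting the segment `[x, s]` as a diameter. -/
def vflower (x : E2) (L : Set E2) : Set E2 :=
  ⋃ s ∈ L, closedBall ((2:ℝ)⁻¹ • (x + s)) (‖s - x‖ / 2)

/-- The support function of `L` with respect to `x`: `p_x(L, w) = sup_{s ∈ L} ⟨s − x, w⟩`. -/
def suppf (x : E2) (L : Set E2) (w : E2) : ℝ :=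
  sSup ((fun s => ⟪s - x, w⟫) '' L)

lemma inv_apply_E2 (y : E2) : EuclideanGeometry.inversion (0:E2) 1 y = ‖y‖⁻¹^2 • y := by
  simp [EuclideanGeometry.inversion, dist_zero_right, div_eq_mul_inv]

lemma mem_vflower_iff (K : Set E2) (y : E2) :
    y ∈ vflower 0 K ↔ ∃ s ∈ K, ‖y‖^2 ≤ ⟪s, y⟫ := by
  simp only [vflower, mem_iUnion, exists_prop]
  refine exists_congr fun s => and_congr_right fun _ => ?_
  rw [mem_closedBall, dist_eq_norm,
    ← pow_le_pow_iff_left₀ (norm_nonneg _) (by positivity) (two_ne_zero),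
    div_pow, norm_sub_sq_real]
  have h1 : ⟪y, (2:ℝ)⁻¹ • ((0:E2) + s)⟫ = 2⁻¹ * ⟪s, y⟫ := by
    rw [real_inner_smul_right, zero_add, real_inner_comm]
  have h2 : ‖(2:ℝ)⁻¹ • ((0:E2) + s)‖^2 = ‖s‖^2/4 := by
    rw [norm_smul, zero_add]; simp; ring
  rw [h1, h2, sub_zero]
  constructor <;> intro h <;> nlinarith

/-- the image of `F₀(K) \ {0}` under the inversion `i` of pole `0` with
respect to the unit circle is `{w : p₀(K,w) ≥ 1}`; its complement is
`{w : p₀(K,w) < 1}`, which is open, bounded, convex and contains `0`. -/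
theorem inversion_flower (K : Set E2) (hKne : K.Nonempty) (hKc : IsCompact K)
    (hKconv : Convex ℝ K) (h0 : (0:E2) ∈ interior K) :
    (EuclideanGeometry.inversion (0:E2) 1 '' (vflower 0 K \ {0})
        = {w : E2 | 1 ≤ suppf 0 K w}) ∧
    ((EuclideanGeometry.inversion (0:E2) 1 '' (vflower 0 K \ {0}))ᶜ
        = {w : E2 | suppf 0 K w < 1}) ∧
    IsOpen {w : E2 | suppf 0 K w < 1} ∧
    Bornology.IsBounded {w : E2 | suppf 0 K w < 1} ∧
    Convex ℝ {w : E2 | suppf 0 K w < 1} ∧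
    (0:E2) ∈ {w : E2 | suppf 0 K w < 1} := by
  have himg : ∀ w : E2, IsCompact ((fun s => ⟪s - 0, w⟫) '' K) := fun w =>
    hKc.image ((continuous_id.sub continuous_const).inner continuous_const)
  have hne : ∀ w : E2, ((fun s => ⟪s - 0, w⟫) '' K).Nonempty := fun w => hKne.image _
  have hattain : ∀ w : E2, ∃ s ∈ K, ⟪s, w⟫ = suppf 0 K w := by
    intro w
    obtain ⟨s, hs, h⟩ := (himg w).sSup_mem (hne w)
    exact ⟨s, hs, by simpa only [suppf, sub_zero] using h⟩
  have hle : ∀ (w s : E2), s ∈ K → ⟪s, w⟫ ≤ suppf 0 K w := fun w s hs =>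
    le_csSup (himg w).bddAbove ⟨s, hs, by simp⟩
  have hsup_le : ∀ (w : E2) (c : ℝ), (∀ s ∈ K, ⟪s, w⟫ ≤ c) → suppf 0 K w ≤ c := by
    intro w c h
    refine csSup_le (hne w) ?_
    rintro _ ⟨s, hs, rfl⟩; simpa only [sub_zero] using h s hs
  have h1 : EuclideanGeometry.inversion (0:E2) 1 '' (vflower 0 K \ {0})
      = {w : E2 | 1 ≤ suppf 0 K w} := by
    ext w
    constructor
    · rintro ⟨y, ⟨hyf, hy0⟩, rfl⟩
      simp only [mem_singleton_iff] at hy0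
      obtain ⟨s, hs, hsy⟩ := (mem_vflower_iff K y).1 hyf
      have hyn : (0:ℝ) < ‖y‖ := norm_pos_iff.2 hy0
      rw [mem_setOf_eq, inv_apply_E2]
      calc (1:ℝ) = ‖y‖⁻¹^2 * ‖y‖^2 := by field_simp
        _ ≤ ‖y‖⁻¹^2 * ⟪s, y⟫ := by
            apply mul_le_mul_of_nonneg_left hsy (by positivity)
        _ = ⟪s, ‖y‖⁻¹^2 • y⟫ := by rw [real_inner_smul_right]
        _ ≤ _ := hle _ s hs
    · intro hw
      rw [mem_setOf_eq] at hw
      obtain ⟨s, hs, hsw⟩ := hattain w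
      have hsw1 : (1:ℝ) ≤ ⟪s, w⟫ := hsw ▸ hw
      have hw0 : w ≠ 0 := by
        rintro rfl
        simp [inner_zero_right] at hsw1
        linarith
      have hwn : (0:ℝ) < ‖w‖ := norm_pos_iff.2 hw0
      refine ⟨‖w‖⁻¹^2 • w, ⟨?_, ?_⟩, ?_⟩
      · rw [mem_vflower_iff]
        refine ⟨s, hs, ?_⟩
        rw [norm_smul, real_inner_smul_right]
        have he : (‖‖w‖⁻¹^2‖ * ‖w‖)^2 = ‖w‖⁻¹^2 := by
          rw [norm_of_nonneg (by positivity)]; field_simp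
        rw [he]
        calc ‖w‖⁻¹^2 = ‖w‖⁻¹^2 * 1 := by ring
          _ ≤ ‖w‖⁻¹^2 * ⟪s, w⟫ := by
              apply mul_le_mul_of_nonneg_left hsw1 (by positivity)
      · simp only [mem_singleton_iff, smul_eq_zero, not_or]
        exact ⟨pow_ne_zero _ (inv_ne_zero (ne_of_gt hwn)), hw0⟩
      · rw [← inv_apply_E2]
        exact EuclideanGeometry.inversion_inversion _ one_ne_zero w
  refine ⟨h1, ?_, ?_, ?_, ?_, ?_⟩
  · rw [h1]; ext w; simp [not_le]
  · -- open
    obtain ⟨M, hM⟩ := hKc.isBounded.exists_norm_le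
    rw [Metric.isOpen_iff]
    intro w hw
    rw [mem_setOf_eq] at hw
    have hM0 : (0:ℝ) ≤ M := le_trans (norm_nonneg _) (hM _ hKne.some_mem)
    refine ⟨(1 - suppf 0 K w) / (M + 1), div_pos (by linarith) (by positivity), ?_⟩
    intro w' hw'
    rw [mem_ball, dist_eq_norm] at hw'
    rw [mem_setOf_eq]
    have key : suppf 0 K w' ≤ suppf 0 K w + M * ‖w' - w‖ := by
      apply hsup_le
      intro s hs
      have hrw : w' = w + (w' - w) := by abel
      rw [hrw, inner_add_right]
      have h2 : ⟪s, w' - w⟫ ≤ M * ‖w' - w‖ :=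
        le_trans (real_inner_le_norm _ _)
          (mul_le_mul_of_nonneg_right (hM s hs) (norm_nonneg _))
      have h3 := hle w s hs
      rw [← hrw]
      linarith
    have h4 : M * ‖w' - w‖ ≤ (M + 1) * ‖w' - w‖ := by nlinarith [norm_nonneg (w' - w)]
    have h3 : (M + 1) * ‖w' - w‖ < (M + 1) * ((1 - suppf 0 K w) / (M + 1)) :=
      mul_lt_mul_of_pos_left hw' (by positivity)
    rw [mul_div_cancel₀ _ (by positivity : (M:ℝ) + 1 ≠ 0)] at h3
    linarith
  · -- bounded
    obtain ⟨ε, hε, hball⟩ := Metric.mem_nhds_iff.1 (mem_interior_iff_mem_nhds.1 h0)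
    apply (isBounded_closedBall (x := (0:E2)) (r := 2/ε)).subset
    intro w hw
    rw [mem_setOf_eq] at hw
    rw [mem_closedBall, dist_zero_right]
    rcases eq_or_ne w 0 with rfl | hw0
    · simp; positivity
    have hwn : (0:ℝ) < ‖w‖ := norm_pos_iff.2 hw0
    have hsmem : ((ε/2) * ‖w‖⁻¹) • w ∈ K := by
      apply hball
      rw [mem_ball, dist_zero_right, norm_smul, norm_of_nonneg (by positivity)]
      rw [mul_assoc, inv_mul_cancel₀ (ne_of_gt hwn), mul_one]
      linarith
    have h5 := hle w _ hsmem
    rw [real_inner_smul_left, real_inner_self_eq_norm_sq] at h5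
    have hkey : (ε/2) * ‖w‖ ≤ suppf 0 K w := by
      calc (ε/2) * ‖w‖ = ε/2 * ‖w‖⁻¹ * ‖w‖^2 := by field_simp
        _ ≤ _ := h5
    rw [le_div_iff₀ hε]
    nlinarith
  · -- convex
    intro w1 hw1 w2 hw2 a b ha hb hab
    rw [mem_setOf_eq] at hw1 hw2 ⊢
    have hub : suppf 0 K (a • w1 + b • w2) ≤ a * suppf 0 K w1 + b * suppf 0 K w2 := by
      apply hsup_le
      intro s hs
      rw [inner_add_right, real_inner_smul_right, real_inner_smul_right]
      have := hle w1 s hs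
      have := hle w2 s hs
      nlinarith
    rcases eq_or_lt_of_le ha with rfl | ha'
    · simp only [zero_add] at hab; subst hab
      simp only [zero_mul, zero_add, one_mul] at hub; linarith
    · nlinarith
  · -- 0 ∈ set
    rw [mem_setOf_eq]
    have hz : suppf 0 K 0 = 0 := by
      have him : (fun s : E2 => ⟪s - 0, (0:E2)⟫) '' K = {0} := by
        ext x; simp only [mem_image, inner_zero_right, mem_singleton_iff]
        exact ⟨fun ⟨s, _, h⟩ => h.symm, fun h => ⟨hKne.some, hKne.some_mem, h.symm⟩⟩
      rw [suppf, him, csSup_singleton]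
    linarith
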